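/- Let M ∈ M_N(ℂ), let a, a_n ∈ W(M) with a_n → a, and let B(c) = {b : diag(c,b) is a compression of M}. Assume all B(a_n) are nonempty. Then for every ε > 0, eventually every b ∈ B(a_n) is within distance ε of the set B(a); i.e., the one-sided Hausdorff distance sup_{b ∈ B(a_n)} dist(b, B(a)) tends to 0. -/

import Mathlib

open Matrix BigOperators Finset

noncomputable section

/-- Numerical range of a complex matrix. -/
def NumRange {n : ℕ} (M : Matrix (Fin n) (Fin n) ℂ) : Set ℂ :=
  { c | ∃ u : Fin n → ℂ, star u ⬝ᵥ u = 1 ∧ star u ⬝ᵥ M.mulVec u = c }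

/-- `C` is a rank-`k` compression of `M`: `C` represents `P_S M |_S` in some
orthonormal basis of a `k`-dimensional subspace `S`. -/
def IsCompression {N k : ℕ} (M : Matrix (Fin N) (Fin N) ℂ)
    (C : Matrix (Fin k) (Fin k) ℂ) : Prop :=
  ∃ f : Fin k → (Fin N → ℂ),
    (∀ i j, star (f i) ⬝ᵥ f j = if i = j then 1 else 0) ∧
    (∀ i j, C i j = star (f i) ⬝ᵥ M.mulVec (f j))

/-- `diag(a,b)` is a compression of `M`. -/
def IsDiagCompression {N : ℕ} (M : Matrix (Fin N) (Fin N) ℂ) (a b : ℂ) : Prop :=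
  ∃ u w : Fin N → ℂ,
    star u ⬝ᵥ u = 1 ∧ star w ⬝ᵥ w = 1 ∧ star u ⬝ᵥ w = 0 ∧
    star u ⬝ᵥ M.mulVec u = a ∧ star w ⬝ᵥ M.mulVec w = b ∧
    star u ⬝ᵥ M.mulVec w = 0 ∧ star w ⬝ᵥ M.mulVec u = 0

/-- The rank-`k` numerical range `Λ_k(M)`. -/
def rankNumRange {N : ℕ} (k : ℕ) (M : Matrix (Fin N) (Fin N) ℂ) : Set ℂ :=
  { c | ∃ P : Matrix (Fin N) (Fin N) ℂ,
      P.IsHermitian ∧ P * P = P ∧ P.rank = k ∧ P * M * P = c • P }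

/-- `M` has an orthonormal basis of eigenvectors with eigenvalue list `z`. -/
def HasONEigenbasis {N : ℕ} (M : Matrix (Fin N) (Fin N) ℂ) (z : Fin N → ℂ) : Prop :=
  ∃ f : Fin N → (Fin N → ℂ),
    (∀ i j, star (f i) ⬝ᵥ f j = if i = j then 1 else 0) ∧
    (∀ j, M.mulVec (f j) = z j • f j)

lemma contDotMul {N : ℕ} (M : Matrix (Fin N) (Fin N) ℂ) :
    Continuous (fun p : (Fin N → ℂ) × (Fin N → ℂ) => star p.1 ⬝ᵥ M.mulVec p.2) := by
  simp only [dotProduct, Matrix.mulVec, Pi.star_apply]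
  refine continuous_finset_sum _ fun i _ => ?_
  refine (Continuous.star ((continuous_apply i).comp continuous_fst)).mul ?_
  exact continuous_finset_sum _ fun j _ =>
    continuous_const.mul ((continuous_apply j).comp continuous_snd)

lemma contDot2 {N : ℕ} :
    Continuous (fun p : (Fin N → ℂ) × (Fin N → ℂ) => star p.1 ⬝ᵥ p.2) := by
  simp only [dotProduct, Pi.star_apply]
  exact continuous_finset_sum _ fun i _ =>
    (Continuous.star ((continuous_apply i).comp continuous_fst)).mul
      ((continuous_apply i).comp continuous_snd)

lemma contDotSelf {N : ℕ} :
    Continuous (fun u : Fin N → ℂ => star u ⬝ᵥ u) := by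
  simp only [dotProduct, Pi.star_apply]
  exact continuous_finset_sum _ fun i _ =>
    (Continuous.star (continuous_apply i)).mul (continuous_apply i)

lemma norm_coord_le {N : ℕ} (u : Fin N → ℂ) (h : star u ⬝ᵥ u = 1) (i : Fin N) :
    ‖u i‖ ≤ 1 := by
  have key : ∀ z : ℂ, star z * z = ((‖z‖ ^ 2 : ℝ) : ℂ) := fun z => by
    rw [Complex.star_def, Complex.conj_mul']; push_cast; ring
  have h2 : ∑ j, ‖u j‖ ^ 2 = 1 := by
    have h' : (∑ j, ((‖u j‖ ^ 2 : ℝ) : ℂ)) = 1 := by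
      rw [← h]; simp only [dotProduct, Pi.star_apply, key]
    exact_mod_cast h'
  have hle : ‖u i‖ ^ 2 ≤ 1 := by
    rw [← h2]
    exact Finset.single_le_sum (f := fun j => ‖u j‖ ^ 2) (fun j _ => sq_nonneg _)
      (Finset.mem_univ i)
  nlinarith [norm_nonneg (u i)]

/-- 2D cross product of complex numbers viewed as plane vectors. -/
def cross2 (p q : ℂ) : ℝ := p.re * q.im - p.im * q.re

theorem stmt_15 {N : ℕ} (M : Matrix (Fin N) (Fin N) ℂ)
    (a : ℂ) (ha : a ∈ NumRange M)
    (aseq : ℕ → ℂ) (haseq : ∀ n, aseq n ∈ NumRange M)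
    (hlim : Filter.Tendsto aseq Filter.atTop (nhds a))
    (hne : ∀ n, {b : ℂ | IsDiagCompression M (aseq n) b}.Nonempty) :
    ∀ ε > (0 : ℝ), ∀ᶠ n in Filter.atTop,
      ∀ b ∈ {b : ℂ | IsDiagCompression M (aseq n) b},
        Metric.infDist b {b' : ℂ | IsDiagCompression M a b'} < ε := by
  intro ε hε
  by_contra hcon
  rw [Filter.not_eventually] at hcon
  obtain ⟨φ, hφ, hφP⟩ := Filter.extraction_of_frequently_atTop hcon
  have hchoice : ∀ k, ∃ b, IsDiagCompression M (aseq (φ k)) b ∧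
      ε ≤ Metric.infDist b {b' : ℂ | IsDiagCompression M a b'} := by
    intro k
    have h := hφP k
    push_neg at h
    obtain ⟨b, hb1, hb2⟩ := h
    exact ⟨b, hb1, hb2⟩
  choose b hb hbd using hchoice
  choose u w h1 h2 h3 h4 h5 h6 h7 using fun k => hb k
  set K : Set ((Fin N → ℂ) × (Fin N → ℂ)) :=
    {q | star q.1 ⬝ᵥ q.1 = 1 ∧ star q.2 ⬝ᵥ q.2 = 1} with hK
  have hKcl : IsClosed K := by
    exact ((isClosed_singleton.preimage (contDotSelf.comp continuous_fst)).inter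
       (isClosed_singleton.preimage (contDotSelf.comp continuous_snd)))
  have hKb : Bornology.IsBounded K := by
    refine (Metric.isBounded_closedBall (x := (0 : (Fin N → ℂ) × (Fin N → ℂ))) (r := 1)).subset ?_
    intro q hq
    rw [Metric.mem_closedBall, dist_zero_right, Prod.norm_def]
    refine max_le ?_ ?_
    · rw [pi_norm_le_iff_of_nonneg zero_le_one]
      exact norm_coord_le q.1 hq.1
    · rw [pi_norm_le_iff_of_nonneg zero_le_one]
      exact norm_coord_le q.2 hq.2
  have hKc : IsCompact K := Metric.isCompact_of_isClosed_isBounded hKcl hKb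
  have hmem : ∀ k, ((u k, w k) : (Fin N → ℂ) × (Fin N → ℂ)) ∈ K := fun k => ⟨h1 k, h2 k⟩
  obtain ⟨q0, hq0K, ψ, hψ, hconv⟩ := hKc.tendsto_subseq hmem
  have hmono : StrictMono (φ ∘ ψ) := hφ.comp hψ
  have hA : Filter.Tendsto (fun k => aseq (φ (ψ k))) Filter.atTop (nhds a) :=
    hlim.comp hmono.tendsto_atTop
  have hu : Filter.Tendsto (fun k => u (ψ k)) Filter.atTop (nhds q0.1) :=
    ((continuous_fst.tendsto q0).comp hconv : _)
  have hwt : Filter.Tendsto (fun k => w (ψ k)) Filter.atTop (nhds q0.2) :=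
    ((continuous_snd.tendsto q0).comp hconv : _)
  have c11 : Filter.Tendsto (fun k => star (u (ψ k)) ⬝ᵥ M.mulVec (u (ψ k)))
      Filter.atTop (nhds (star q0.1 ⬝ᵥ M.mulVec q0.1)) :=
    by have h2 := ((contDotMul M).tendsto (q0.1, q0.1)).comp (hu.prodMk_nhds hu)
       simpa [Function.comp_def] using h2
  have c22 : Filter.Tendsto (fun k => star (w (ψ k)) ⬝ᵥ M.mulVec (w (ψ k)))
      Filter.atTop (nhds (star q0.2 ⬝ᵥ M.mulVec q0.2)) :=
    by have h2 := ((contDotMul M).tendsto (q0.2, q0.2)).comp (hwt.prodMk_nhds hwt)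
       simpa [Function.comp_def] using h2
  have c12 : Filter.Tendsto (fun k => star (u (ψ k)) ⬝ᵥ M.mulVec (w (ψ k)))
      Filter.atTop (nhds (star q0.1 ⬝ᵥ M.mulVec q0.2)) :=
    by have h2 := ((contDotMul M).tendsto (q0.1, q0.2)).comp (hu.prodMk_nhds hwt)
       simpa [Function.comp_def] using h2
  have c21 : Filter.Tendsto (fun k => star (w (ψ k)) ⬝ᵥ M.mulVec (u (ψ k)))
      Filter.atTop (nhds (star q0.2 ⬝ᵥ M.mulVec q0.1)) :=
    by have h2 := ((contDotMul M).tendsto (q0.2, q0.1)).comp (hwt.prodMk_nhds hu)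
       simpa [Function.comp_def] using h2
  have c0 : Filter.Tendsto (fun k => star (u (ψ k)) ⬝ᵥ (w (ψ k)))
      Filter.atTop (nhds (star q0.1 ⬝ᵥ q0.2)) :=
    by have h2 := (contDot2.tendsto (q0.1, q0.2)).comp (hu.prodMk_nhds hwt)
       simpa [Function.comp_def] using h2
  have ea : star q0.1 ⬝ᵥ M.mulVec q0.1 = a := by
    refine tendsto_nhds_unique ?_ hA
    convert c11 using 2 with k
    exact (h4 (ψ k)).symm
  have e0 : star q0.1 ⬝ᵥ q0.2 = 0 := by
    have hc : Filter.Tendsto (fun _ : ℕ => (0 : ℂ)) Filter.atTop (nhds (star q0.1 ⬝ᵥ q0.2)) := by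
      simpa [h3] using c0
    exact tendsto_nhds_unique hc tendsto_const_nhds
  have e12 : star q0.1 ⬝ᵥ M.mulVec q0.2 = 0 := by
    have hc : Filter.Tendsto (fun _ : ℕ => (0 : ℂ)) Filter.atTop (nhds (star q0.1 ⬝ᵥ M.mulVec q0.2)) := by
      simpa [h6] using c12
    exact tendsto_nhds_unique hc tendsto_const_nhds
  have e21 : star q0.2 ⬝ᵥ M.mulVec q0.1 = 0 := by
    have hc : Filter.Tendsto (fun _ : ℕ => (0 : ℂ)) Filter.atTop (nhds (star q0.2 ⬝ᵥ M.mulVec q0.1)) := by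
      simpa [h7] using c21
    exact tendsto_nhds_unique hc tendsto_const_nhds
  set b0 : ℂ := star q0.2 ⬝ᵥ M.mulVec q0.2 with hb0
  have hb0mem : b0 ∈ {b' : ℂ | IsDiagCompression M a b'} :=
    ⟨q0.1, q0.2, hq0K.1, hq0K.2, e0, ea, rfl, e12, e21⟩
  have hbconv : Filter.Tendsto (fun k => b (ψ k)) Filter.atTop (nhds b0) := by
    convert c22 using 2 with k
    exact (h5 (ψ k)).symm
  have : ∀ᶠ k in Filter.atTop, dist (b (ψ k)) b0 < ε :=
    (Metric.tendsto_nhds.mp hbconv) ε hε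
  obtain ⟨k, hk⟩ := this.exists
  have hle : Metric.infDist (b (ψ k)) {b' : ℂ | IsDiagCompression M a b'} ≤
      dist (b (ψ k)) b0 := Metric.infDist_le_dist_of_mem hb0mem
  have := hbd (ψ k)
  linarith
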